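/- Let T be a positive operator (or positive measurable function μ(t)) with singular value function μ(t,T) ∼ ψ(t) as t → ∞, where ψ : [0,∞) → (0,∞) is regularly varying of index −1. Then for every q > 0, the heat trace satisfies Tr(e^{−T^{−q}/t}) ∼ Γ(1 + 1/q) · ψ^{−1}(t^{−1/q}) as t → ∞. (In the commutative model: if μ : [0,∞) → (0,∞) is decreasing with μ(t) ∼ ψ(t), then ∫_0^∞ e^{−μ(s)^{−q}/t} ds ∼ Γ(1+1/q) ψ^{−1}(t^{−1/q}) as t → ∞.) -/

import Mathlib

open Filter Topology MeasureTheory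

private lemma aux_dbl_iter (ψ : ℝ → ℝ) (Y : ℝ) (hY1 : 1 ≤ Y)
    (hdbl : ∀ y, Y ≤ y → ψ (2*y) ≤ 2/3 * ψ y) (a : ℝ) (ha : Y ≤ a) :
    ∀ k : ℕ, ψ (a * 2^k) ≤ (2/3)^k * ψ a := by
  intro k
  induction k with
  | zero => simp
  | succ k ih =>
    have h1 : (1:ℝ) ≤ 2^k := one_le_pow₀ (by norm_num)
    have h2 : Y ≤ a * 2^k := by nlinarith
    have h3 : ψ (2 * (a * 2^k)) ≤ 2/3 * ψ (a * 2^k) := hdbl _ h2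
    have : a * 2^(k+1) = 2 * (a * 2^k) := by ring
    rw [this, pow_succ]
    nlinarith

private lemma aux_psi_small (ψ : ℝ → ℝ) (hψpos : ∀ t : ℝ, 0 ≤ t → 0 < ψ t) (Y : ℝ) (hY1 : 1 ≤ Y)
    (hdbl : ∀ y, Y ≤ y → ψ (2*y) ≤ 2/3 * ψ y) :
    ∀ ε : ℝ, 0 < ε → ∃ s, 0 ≤ s ∧ ψ s ≤ ε := by
  intro ε hε
  have hψY : 0 < ψ Y := hψpos Y (by linarith)
  obtain ⟨n, hn⟩ := exists_pow_lt_of_lt_one (div_pos hε hψY) (by norm_num : (2:ℝ)/3 < 1)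
  refine ⟨Y * 2^n, by positivity, ?_⟩
  have h1 := aux_dbl_iter ψ Y hY1 hdbl Y le_rfl n
  have h2 : (2/3:ℝ)^n * ψ Y < ε := by
    rw [lt_div_iff₀ hψY] at hn
    linarith
  linarith

private lemma aux_exp_neg_le (z : ℝ) (hz : 0 < z) (n : ℕ) (hn : 1 ≤ n) :
    Real.exp (-z) ≤ ((n:ℝ)/z)^n := by
  have hn0 : (0:ℝ) < n := by exact_mod_cast hn
  have h1 : Real.exp z = (Real.exp (z/n))^n := by
    rw [← Real.exp_nat_mul]; congr 1; field_simp
  have h2 : z/n ≤ Real.exp (z/n) := by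
    linarith [Real.add_one_le_exp (z/n)]
  have h3 : (z/n)^n ≤ (Real.exp (z/n))^n :=
    pow_le_pow_left₀ (by positivity) h2 n
  have h4 : (0:ℝ) < (z/n)^n := by positivity
  have h5 : ((Real.exp (z/n))^n)⁻¹ ≤ ((z/n)^n)⁻¹ := by
    apply inv_anti₀ h4 h3
  rw [Real.exp_neg, h1]
  refine h5.trans (le_of_eq ?_)
  rw [div_pow, inv_div, div_pow]

set_option maxHeartbeats 1000000 in
theorem stmt5 (ψ μ : ℝ → ℝ) (q : ℝ) (hq : 0 < q)
    (hψpos : ∀ t : ℝ, 0 ≤ t → 0 < ψ t)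
    (hψdec : AntitoneOn ψ (Set.Ici 0))
    (hrv : ∀ l : ℝ, 0 < l →
      Tendsto (fun t : ℝ => ψ (l * t) / ψ t) atTop (𝓝 l⁻¹))
    (hμpos : ∀ t : ℝ, 0 ≤ t → 0 < μ t)
    (hμdec : AntitoneOn μ (Set.Ici 0))
    (hμmeas : Measurable μ)
    (hequiv : Tendsto (fun t : ℝ => μ t / ψ t) atTop (𝓝 1))
    (ψinv : ℝ → ℝ)
    (hinv : ∀ u : ℝ, 0 < u → ψinv u = sInf {t : ℝ | 0 ≤ t ∧ ψ t ≤ u}) :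
    Tendsto (fun t : ℝ =>
        (∫ s in Set.Ioi (0 : ℝ), Real.exp (-((μ s) ^ (-q)) / t)) /
          (Real.Gamma (1 + 1 / q) * ψinv (t ^ (-(1 / q)))))
      atTop (𝓝 1) := by
  have hq' : (0:ℝ) < 1/q := by positivity
  -- doubling bound
  obtain ⟨Y, hY1, hdbl⟩ : ∃ Y : ℝ, 1 ≤ Y ∧ ∀ y, Y ≤ y → ψ (2*y) ≤ 2/3 * ψ y := by
    have h := (hrv 2 two_pos).eventually (eventually_le_nhds (by norm_num : (2:ℝ)⁻¹ < 2/3))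
    rw [eventually_atTop] at h
    obtain ⟨Y0, hY0⟩ := h
    refine ⟨max Y0 1, le_max_right _ _, fun y hy => ?_⟩
    have hy1 : (1:ℝ) ≤ y := le_trans (le_max_right _ _) hy
    have h1 := hY0 y (le_trans (le_max_left _ _) hy)
    have hψy : 0 < ψ y := hψpos y (by linarith)
    rw [div_le_iff₀ hψy] at h1
    linarith
  have hsmall := aux_psi_small ψ hψpos Y hY1 hdbl
  set A : ℝ → ℝ := fun t => ψinv (t ^ (-(1/q))) with hA
  have hu : ∀ t : ℝ, 0 < t → 0 < t ^ (-(1/q)) := fun t ht => Real.rpow_pos_of_pos ht _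
  have hSne : ∀ u : ℝ, 0 < u → {s : ℝ | 0 ≤ s ∧ ψ s ≤ u}.Nonempty := fun u h => hsmall u h
  have hSbdd : ∀ u : ℝ, BddBelow {s : ℝ | 0 ≤ s ∧ ψ s ≤ u} := fun u => ⟨0, fun s hs => hs.1⟩
  have hAdef : ∀ t : ℝ, 0 < t → A t = sInf {s : ℝ | 0 ≤ s ∧ ψ s ≤ t ^ (-(1/q))} :=
    fun t ht => hinv _ (hu t ht)
  have hA0 : ∀ t : ℝ, 0 < t → 0 ≤ A t := by
    intro t ht
    rw [hAdef t ht]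
    exact le_csInf (hSne _ (hu t ht)) (fun s hs => hs.1)
  have hAle : ∀ t : ℝ, 0 < t → ∀ s, A t < s → ψ s ≤ t ^ (-(1/q)) := by
    intro t ht s hs
    rw [hAdef t ht] at hs
    obtain ⟨s', hs', hlt⟩ := exists_lt_of_csInf_lt (hSne _ (hu t ht)) hs
    exact le_trans (hψdec hs'.1 (le_trans hs'.1 hlt.le) hlt.le) hs'.2
  have hAgt : ∀ t : ℝ, 0 < t → ∀ s, 0 ≤ s → s < A t → t ^ (-(1/q)) < ψ s := by
    intro t ht s hs0 hs
    by_contra hcon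
    push_neg at hcon
    have : A t ≤ s := by
      rw [hAdef t ht]
      exact csInf_le (hSbdd _) ⟨hs0, hcon⟩
    linarith
  have hAtop : Tendsto A atTop atTop := by
    rw [tendsto_atTop]
    intro T
    have hψT : 0 < ψ (max T 0) := hψpos _ (le_max_right _ _)
    have h0 : ∀ᶠ t : ℝ in atTop, t ^ (-(1/q)) < ψ (max T 0) :=
      (tendsto_rpow_neg_atTop hq').eventually (eventually_lt_nhds hψT)
    filter_upwards [h0, eventually_gt_atTop 0] with t ht htpos
    have : max T 0 ≤ A t := by
      rw [hAdef t htpos]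
      refine le_csInf (hSne _ (hu t htpos)) (fun s hs => ?_)
      by_contra hcon
      push_neg at hcon
      have := hψdec hs.1 (Set.mem_Ici.2 (le_max_right _ _)) hcon.le
      linarith [hs.2]
    exact le_trans (le_max_left _ _) this
  have hratio : Tendsto (fun t => t ^ (-(1/q)) / ψ (A t)) atTop (𝓝 1) := by
    rw [Metric.tendsto_nhds]
    intro δ hδ
    set ε := δ/2 with hε
    have hε0 : 0 < ε := by positivity
    have hε1 : (0:ℝ) < 1 + ε := by linarith
    have l1 : Tendsto (fun t => ψ ((1+ε) * A t) / ψ (A t)) atTop (𝓝 (1+ε)⁻¹) :=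
      (hrv _ hε1).comp hAtop
    have l2 : Tendsto (fun t => ψ ((1+ε)⁻¹ * A t) / ψ (A t)) atTop (𝓝 (1+ε)) := by
      have h := (hrv _ (inv_pos.2 hε1)).comp hAtop
      rwa [inv_inv] at h
    have e1 := l1.eventually (eventually_gt_nhds (show (1+ε)⁻¹ - δ/4 < (1+ε)⁻¹ by linarith))
    have e2 := l2.eventually (eventually_lt_nhds (show (1+ε) < (1+ε) + δ/4 by linarith))
    filter_upwards [e1, e2, hAtop.eventually_ge_atTop 1, eventually_gt_atTop 0] with t h1 h2 hA1 ht
    have hApos : (0:ℝ) < A t := lt_of_lt_of_le one_pos hA1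
    have hψA : 0 < ψ (A t) := hψpos _ hApos.le
    have hub : ψ ((1+ε) * A t) ≤ t ^ (-(1/q)) := hAle t ht _ (by nlinarith)
    have hlb : t ^ (-(1/q)) < ψ ((1+ε)⁻¹ * A t) := by
      apply hAgt t ht _ (by positivity)
      rw [inv_mul_lt_iff₀ hε1]
      nlinarith
    have g1 : (1+ε)⁻¹ - δ/4 < t ^ (-(1/q)) / ψ (A t) :=
      lt_of_lt_of_le h1 (div_le_div_of_nonneg_right hub hψA.le)
    have g2 : t ^ (-(1/q)) / ψ (A t) < (1+ε) + δ/4 :=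
      lt_of_le_of_lt (div_le_div_of_nonneg_right hlb.le hψA.le) h2
    rw [Real.dist_eq, abs_sub_lt_iff]
    have hinvge : 1 - ε ≤ (1+ε)⁻¹ := by
      nlinarith [mul_inv_cancel₀ hε1.ne', inv_pos.2 hε1]
    constructor <;> nlinarith
  have hratio2 : Tendsto (fun t => ψ (A t) / t ^ (-(1/q))) atTop (𝓝 1) := by
    have h := hratio.inv₀ one_ne_zero
    rw [inv_one] at h
    simpa [inv_div] using h
  obtain ⟨M, hM⟩ : ∃ M : ℝ, ∀ s, M ≤ s → μ s ≤ 2 * ψ s := by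
    have h := hequiv.eventually (eventually_le_nhds (by norm_num : (1:ℝ) < 2))
    rw [eventually_atTop] at h
    obtain ⟨M0, hM0⟩ := h
    refine ⟨max M0 0, fun s hs => ?_⟩
    have h1 := hM0 s (le_trans (le_max_left _ _) hs)
    have hψs : 0 < ψ s := hψpos s (le_trans (le_max_right _ _) hs)
    rw [div_le_iff₀ hψs] at h1
    linarith
  have hpt : ∀ x : ℝ, 0 < x →
      Tendsto (fun t => Real.exp (-((μ (A t * x)) ^ (-q)) / t)) atTop
        (𝓝 (Real.exp (-x ^ q))) := by
    intro x hx
    have hm1 : Tendsto (fun t => μ (A t * x) / ψ (A t * x)) atTop (𝓝 1) :=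
      hequiv.comp (hAtop.atTop_mul_const hx)
    have hm2 : Tendsto (fun t => ψ (x * A t) / ψ (A t)) atTop (𝓝 x⁻¹) := (hrv x hx).comp hAtop
    have hprod := (hm1.mul hm2).mul hratio2
    rw [one_mul, mul_one] at hprod
    have hprod2 : Tendsto (fun t => μ (A t * x) / t ^ (-(1/q))) atTop (𝓝 x⁻¹) := by
      refine hprod.congr' ?_
      filter_upwards [hAtop.eventually_ge_atTop 1, eventually_gt_atTop 0] with t hA1 ht
      have hA0' : (0:ℝ) ≤ A t := by linarith
      have h1 : 0 < ψ (A t * x) := hψpos _ (by positivity)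
      have h2 : 0 < ψ (A t) := hψpos _ hA0'
      have h3 : 0 < t ^ (-(1/q)) := hu t ht
      rw [mul_comm x (A t)]
      field_simp
    have hm4 : Tendsto (fun t => (μ (A t * x) / t ^ (-(1/q))) ^ (-q)) atTop (𝓝 (x ^ q)) := by
      have h := hprod2.rpow_const (p := -q) (Or.inl (inv_ne_zero hx.ne'))
      rwa [Real.inv_rpow hx.le, Real.rpow_neg hx.le, inv_inv] at h
    have hm5 : Tendsto (fun t => μ (A t * x) ^ (-q) / t) atTop (𝓝 (x ^ q)) := by
      refine hm4.congr' ?_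
      filter_upwards [hAtop.eventually_ge_atTop 1, eventually_gt_atTop 0] with t hA1 ht
      have hA0' : (0:ℝ) ≤ A t := by linarith
      have hμ0 : 0 < μ (A t * x) := hμpos _ (by positivity)
      have hu0 : 0 < t ^ (-(1/q)) := hu t ht
      rw [Real.div_rpow hμ0.le hu0.le]
      congr 1
      rw [← Real.rpow_mul ht.le]
      have hq0 : q ≠ 0 := hq.ne'
      rw [show -(1/q) * -q = 1 by field_simp, Real.rpow_one]
    have hfin := (Real.continuous_exp.tendsto _).comp (hm5.neg)
    simp only [Function.comp_def] at hfin
    exact hfin.congr (fun t => by rw [neg_div])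
  -- constants for the dominating function
  set β : ℝ := Real.log (3/2) / Real.log 2 with hβdef
  have hβ : 0 < β := div_pos (Real.log_pos (by norm_num)) (Real.log_pos (by norm_num))
  set α : ℝ := β * q with hαdef
  have hα : 0 < α := mul_pos hβ hq
  set c : ℝ := (6:ℝ) ^ (-q) with hcdef
  have hc : (0:ℝ) < c := Real.rpow_pos_of_pos (by norm_num) _
  obtain ⟨n, hn⟩ := exists_nat_gt (1/α)
  have hn0 : (0:ℝ) < n := lt_trans (by positivity) hn
  have hn1 : 1 ≤ n := Nat.one_le_iff_ne_zero.2 (by exact_mod_cast hn0.ne')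
  have hαn : 1 < α * n := by
    rw [div_lt_iff₀ hα] at hn
    nlinarith
  set K : ℝ := ((n:ℝ)/c)^n with hKdef
  have hK : 0 < K := by positivity
  set B : ℝ → ℝ := fun x => if x ≤ 1 then 1 else K * x ^ (-(α * n)) with hBdef
  -- the key Potter-type estimate
  have hkey : ∀ t : ℝ, 0 < t → Y ≤ A t → M ≤ A t → 1 ≤ A t → ψ (A t) ≤ 2 * t ^ (-(1/q)) →
      ∀ x : ℝ, 1 < x → Real.exp (-(μ (A t * x) ^ (-q)) / t) ≤ K * x ^ (-(α * n)) := by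
    intro t ht hYA hMA h1A hψA2 x hx1
    have hx0 : (0:ℝ) < x := by linarith
    have hA0' : (0:ℝ) ≤ A t := by linarith
    set k : ℕ := ⌊Real.logb 2 x⌋₊ with hkdef
    have hlogb0 : 0 ≤ Real.logb 2 x := Real.logb_nonneg one_lt_two hx1.le
    have hk1 : (2:ℝ)^(k:ℝ) ≤ x := by
      rw [← Real.rpow_logb two_pos (by norm_num) hx0]
      exact Real.rpow_le_rpow_of_exponent_le one_le_two (Nat.floor_le hlogb0)
    have hk2 : Real.logb 2 x - 1 ≤ (k:ℝ) := by
      have := Nat.lt_floor_add_one (Real.logb 2 x)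
      linarith
    have hpot : ψ (A t * 2^k) ≤ (2/3)^k * ψ (A t) := aux_dbl_iter ψ Y hY1 hdbl (A t) hYA k
    have h2k : (2:ℝ)^(k:ℕ) ≤ x := by rwa [← Real.rpow_natCast 2 k]
    have h1k : (1:ℝ) ≤ 2^(k:ℕ) := one_le_pow₀ (by norm_num)
    have hmono : ψ (A t * x) ≤ ψ (A t * 2^k) := by
      apply hψdec (Set.mem_Ici.2 (by positivity)) (Set.mem_Ici.2 (by positivity))
      nlinarith
    have hpk : (0:ℝ) < (2/3:ℝ)^k := by positivity
    have hu0 : 0 < t ^ (-(1/q)) := hu t ht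
    have hμle : μ (A t * x) ≤ 4 * (2/3)^k * t ^ (-(1/q)) := by
      have e1 : μ (A t * x) ≤ 2 * ψ (A t * x) := by
        apply hM
        calc M ≤ A t := hMA
          _ = A t * 1 := (mul_one _).symm
          _ ≤ A t * x := by nlinarith
      have e2 : 0 < ψ (A t * x) := hψpos _ (by positivity)
      have e3 : 0 < ψ (A t) := hψpos _ hA0'
      nlinarith
    have hμpos' : 0 < μ (A t * x) := hμpos _ (by positivity)
    have hD : (0:ℝ) < 4 * (2/3:ℝ)^k * t ^ (-(1/q)) := by positivity
    have s5 : (4 * (2/3:ℝ)^k * t ^ (-(1/q))) ^ (-q) ≤ μ (A t * x) ^ (-q) :=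
      Real.rpow_le_rpow_of_nonpos hμpos' hμle (by linarith)
    have hxβ : (0:ℝ) < x ^ β := Real.rpow_pos_of_pos hx0 _
    have hx_beta : (2/3:ℝ)^k ≤ 3/2 * x ^ (-β) := by
      have e1 : ((3:ℝ)/2) ^ (Real.logb 2 x) = x ^ β := by
        rw [Real.rpow_def_of_pos (by norm_num), Real.rpow_def_of_pos hx0, Real.logb, hβdef]
        congr 1
        ring
      have e2 : ((3:ℝ)/2) ^ (Real.logb 2 x - 1) ≤ (3/2:ℝ) ^ ((k:ℕ):ℝ) :=
        Real.rpow_le_rpow_of_exponent_le (by norm_num) hk2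
      rw [Real.rpow_natCast] at e2
      rw [Real.rpow_sub (by norm_num), Real.rpow_one, e1] at e2
      have h32k : (0:ℝ) < (3/2:ℝ)^k := by positivity
      have hinveq : (2/3:ℝ)^k = ((3/2:ℝ)^k)⁻¹ := by
        rw [← inv_pow]
        norm_num
      have e3 : ((3/2:ℝ)^k)⁻¹ ≤ (x ^ β / (3/2))⁻¹ := inv_anti₀ (by positivity) e2
      rw [inv_div] at e3
      rw [hinveq, Real.rpow_neg hx0.le]
      calc ((3/2:ℝ)^k)⁻¹ ≤ 3/2 / x ^ β := e3
        _ = 3/2 * (x ^ β)⁻¹ := by ring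
    have hD2 : 4 * (2/3:ℝ)^k * t ^ (-(1/q)) ≤ 6 * x ^ (-β) * t ^ (-(1/q)) := by
      have hxnb : (0:ℝ) < x ^ (-β) := Real.rpow_pos_of_pos hx0 _
      rw [Real.rpow_neg hx0.le] at hx_beta ⊢
      nlinarith
    have hD3 : (0:ℝ) < 6 * x ^ (-β) * t ^ (-(1/q)) := by
      have hxnb : (0:ℝ) < x ^ (-β) := Real.rpow_pos_of_pos hx0 _
      positivity
    have s6 : (6 * x ^ (-β) * t ^ (-(1/q))) ^ (-q) ≤ (4 * (2/3:ℝ)^k * t ^ (-(1/q))) ^ (-q) :=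
      Real.rpow_le_rpow_of_nonpos hD hD2 (by linarith)
    have hq0 : q ≠ 0 := hq.ne'
    have s7 : (6 * x ^ (-β) * t ^ (-(1/q))) ^ (-q) = c * x ^ α * t := by
      have hxnb : (0:ℝ) ≤ x ^ (-β) := (Real.rpow_pos_of_pos hx0 _).le
      rw [Real.mul_rpow (by positivity) hu0.le, Real.mul_rpow (by norm_num) hxnb]
      rw [← Real.rpow_mul ht.le, show -(1/q) * -q = 1 by field_simp, Real.rpow_one]
      rw [← Real.rpow_mul hx0.le, show -β * -q = α by rw [hαdef]; ring]
    have s8 : c * x ^ α ≤ μ (A t * x) ^ (-q) / t := by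
      rw [le_div_iff₀ ht]
      calc c * x ^ α * t = (6 * x ^ (-β) * t ^ (-(1/q))) ^ (-q) := s7.symm
        _ ≤ (4 * (2/3:ℝ)^k * t ^ (-(1/q))) ^ (-q) := s6
        _ ≤ μ (A t * x) ^ (-q) := s5
    have hz : 0 < c * x ^ α := by positivity
    have e4 : Real.exp (-(μ (A t * x) ^ (-q)) / t) ≤ Real.exp (-(c * x ^ α)) := by
      rw [neg_div]
      exact Real.exp_le_exp.2 (neg_le_neg s8)
    have e5 := aux_exp_neg_le _ hz n hn1
    have e6 : ((n:ℝ)/(c * x ^ α))^n = K * x ^ (-(α * n)) := by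
      have hxα : (0:ℝ) < x ^ α := Real.rpow_pos_of_pos hx0 _
      rw [hKdef]
      rw [show (n:ℝ)/(c * x ^ α) = (n:ℝ)/c * (x ^ α)⁻¹ by field_simp]
      rw [mul_pow, inv_pow]
      congr 1
      rw [← Real.rpow_natCast (x ^ α) n, ← Real.rpow_mul hx0.le, ← Real.rpow_neg hx0.le]
    calc Real.exp (-(μ (A t * x) ^ (-q)) / t) ≤ Real.exp (-(c * x ^ α)) := e4
      _ ≤ ((n:ℝ)/(c * x ^ α))^n := e5
      _ = K * x ^ (-(α * n)) := e6
  -- the dominating function is integrable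
  have hBint : IntegrableOn B (Set.Ioi (0:ℝ)) volume := by
    have h1 : IntegrableOn B (Set.Ioc (0:ℝ) 1) volume := by
      refine MeasureTheory.IntegrableOn.congr_fun (f := fun _ : ℝ => (1:ℝ))
        (integrableOn_const measure_Ioc_lt_top.ne) ?_ measurableSet_Ioc
      intro x hx
      simp only [hBdef]
      rw [if_pos hx.2]
    have h2 : IntegrableOn B (Set.Ioi (1:ℝ)) volume := by
      have hlt : -(α * (n:ℝ)) < -1 := by linarith
      refine MeasureTheory.IntegrableOn.congr_fun (f := fun x : ℝ => K * x ^ (-(α * (n:ℝ))))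
        ((integrableOn_Ioi_rpow_of_lt hlt one_pos).const_mul K) ?_ measurableSet_Ioi
      intro x hx
      simp only [hBdef]
      rw [if_neg (not_le.2 hx)]
    have h := h1.union h2
    rwa [Set.Ioc_union_Ioi_eq_Ioi zero_le_one] at h
  have hb1 : ∀ᶠ t : ℝ in atTop, ψ (A t) ≤ 2 * t ^ (-(1/q)) := by
    have h := hratio2.eventually (eventually_le_nhds (by norm_num : (1:ℝ) < 2))
    filter_upwards [h, eventually_gt_atTop 0] with t h1 ht
    rw [div_le_iff₀ (hu t ht)] at h1
    linarith
  have hDCT : Tendsto (fun t => ∫ x in Set.Ioi (0:ℝ), Real.exp (-(μ (A t * x) ^ (-q)) / t)) atTop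
      (𝓝 (∫ x in Set.Ioi (0:ℝ), Real.exp (-x ^ q))) := by
    apply tendsto_integral_filter_of_dominated_convergence B
    · apply Eventually.of_forall
      intro t
      apply Measurable.aestronglyMeasurable
      fun_prop
    · filter_upwards [eventually_gt_atTop 0, hAtop.eventually_ge_atTop (max (max Y M) 1), hb1]
        with t ht hAY hψ2
      rw [MeasureTheory.ae_restrict_iff' measurableSet_Ioi]
      apply Eventually.of_forall
      intro x hx
      have hx0 : (0:ℝ) < x := hx
      have hA1 : 1 ≤ A t := le_trans (le_max_right _ _) hAY
      have hA0' : (0:ℝ) ≤ A t := by linarith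
      rw [Real.norm_eq_abs, abs_of_pos (Real.exp_pos _)]
      rcases le_or_gt x 1 with hx1 | hx1
      · simp only [hBdef]
        rw [if_pos hx1]
        have hμ0 : 0 < μ (A t * x) := hμpos _ (by positivity)
        have : -(μ (A t * x) ^ (-q)) / t ≤ 0 := by
          apply div_nonpos_of_nonpos_of_nonneg _ ht.le
          simp only [neg_nonpos]
          positivity
        calc Real.exp (-(μ (A t * x) ^ (-q)) / t) ≤ Real.exp 0 := Real.exp_le_exp.2 this
          _ = 1 := Real.exp_zero
      · simp only [hBdef]
        rw [if_neg (not_le.2 hx1)]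
        exact hkey t ht (le_trans (le_trans (le_max_left _ _) (le_max_left _ _)) hAY)
          (le_trans (le_trans (le_max_right _ _) (le_max_left _ _)) hAY) hA1 hψ2 x hx1
    · exact hBint
    · filter_upwards [self_mem_ae_restrict measurableSet_Ioi] with x hx
      exact hpt x hx
  -- final assembly
  have hGpos : 0 < Real.Gamma (1 + 1/q) := Real.Gamma_pos_of_pos (by positivity)
  have h2 : Tendsto (fun t => (∫ x in Set.Ioi (0:ℝ),
      Real.exp (-(μ (A t * x) ^ (-q)) / t)) / Real.Gamma (1 + 1/q)) atTop (𝓝 1) := by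
    have h := hDCT.div_const (Real.Gamma (1 + 1/q))
    rwa [integral_exp_neg_rpow hq, show (1/q + 1 : ℝ) = 1 + 1/q from add_comm _ _,
      div_self hGpos.ne'] at h
  apply Tendsto.congr' _ h2
  filter_upwards [hAtop.eventually_ge_atTop 1, eventually_gt_atTop 0] with t hA1 ht
  have hApos : 0 < A t := lt_of_lt_of_le one_pos hA1
  have hch := integral_comp_mul_left_Ioi (fun s => Real.exp (-(μ s ^ (-q)) / t)) 0 hApos
  rw [mul_zero] at hch
  show (∫ x in Set.Ioi (0:ℝ), Real.exp (-(μ (A t * x) ^ (-q)) / t)) / Real.Gamma (1 + 1/q) = _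
  rw [hch, smul_eq_mul, show ψinv (t ^ (-(1/q))) = A t from rfl,
    mul_comm (Real.Gamma (1 + 1/q)) (A t), ← div_div, inv_mul_eq_div]
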